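/- The complex Jacobian determinant of the map G : ℂ^n → ℂ^n given by G(w) = (w₁·w_{k+1}⋯w_n, …, w_k·w_{k+1}⋯w_n, w_{k+1}⋯w_n, w_{k+2}⋯w_n, …, w_{n−1}w_n, w_n) equals w_{k+1}^k · w_{k+2}^{k+1} ⋯ w_n^{n−1}. -/

import Mathlib

/-- G(w) = (w₁·w_{k+1}⋯w_n, …, w_k·w_{k+1}⋯w_n, w_{k+1}⋯w_n, …, w_{n-1}w_n, w_n)
(0-based indices). -/
noncomputable def hartogsG (n k : ℕ) (w : Fin n → ℂ) : Fin n → ℂ := fun i =>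
  (if (i : ℕ) < k then w i else 1) *
    ∏ s : Fin n, (if max (i : ℕ) k ≤ (s : ℕ) then w s else 1)

/-- The complex Jacobian determinant of G equals w_{k+1}^k · w_{k+2}^{k+1} ⋯ w_n^{n-1}
(0-based: ∏_{j≥k} w_j^j). -/
theorem hartogsG_jacobian_det (n k : ℕ) (hk : 1 ≤ k) (hkn : k < n) (w : Fin n → ℂ) :
    LinearMap.det (fderiv ℂ (hartogsG n k) w).toLinearMap =
      ∏ j : Fin n, (if k ≤ (j : ℕ) then w j ^ (j : ℕ) else 1) := by
  classical
  set J : Matrix (Fin n) (Fin n) ℂ := fun i j =>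
    (if (i : ℕ) < k then w i else 1) *
      (if max (i : ℕ) k ≤ (j : ℕ) then
        ∏ t ∈ Finset.univ.erase j, (if max (i : ℕ) k ≤ (t : ℕ) then w t else 1) else 0)
    + (∏ s : Fin n, (if max (i : ℕ) k ≤ (s : ℕ) then w s else 1)) *
      (if (i : ℕ) < k ∧ j = i then 1 else 0) with hJ
  have hL : HasFDerivAt (hartogsG n k)
      (LinearMap.toContinuousLinearMap (Matrix.toLin' J)) w := by
    apply hasFDerivAt_pi''
    intro i
    have hA : HasFDerivAt (fun w : Fin n → ℂ => if (i : ℕ) < k then w i else 1)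
        (if (i : ℕ) < k then (ContinuousLinearMap.proj i : (Fin n → ℂ) →L[ℂ] ℂ) else 0) w := by
      split_ifs
      · exact hasFDerivAt_apply i w
      · exact hasFDerivAt_const 1 w
    have hB : HasFDerivAt
        (fun w : Fin n → ℂ => ∏ s : Fin n, (if max (i : ℕ) k ≤ (s : ℕ) then w s else 1))
        (∑ s : Fin n,
          (∏ t ∈ Finset.univ.erase s, (if max (i : ℕ) k ≤ (t : ℕ) then w t else 1)) •
          (if max (i : ℕ) k ≤ (s : ℕ) then (ContinuousLinearMap.proj s : (Fin n → ℂ) →L[ℂ] ℂ)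
            else 0)) w := by
      apply HasFDerivAt.finset_prod
      intro s _
      split_ifs
      · exact hasFDerivAt_apply s w
      · exact hasFDerivAt_const 1 w
    have h := hA.mul hB
    apply h.congr_fderiv
    ext v
    show _ = Matrix.mulVec J v i
    simp only [ContinuousLinearMap.coe_comp', Function.comp_apply,
      ContinuousLinearMap.proj_apply, ContinuousLinearMap.add_apply,
      ContinuousLinearMap.smul_apply, ContinuousLinearMap.sum_apply,
      LinearMap.coe_toContinuousLinearMap', Matrix.toLin'_apply, Matrix.mulVec,
      dotProduct, hJ, apply_ite (fun f : (Fin n → ℂ) →L[ℂ] ℂ => f v),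
      ContinuousLinearMap.zero_apply, smul_eq_mul, add_mul, Finset.sum_add_distrib,
      Finset.mul_sum]
    congr 1
    · apply Finset.sum_congr rfl
      intro x _
      by_cases hx : (i : ℕ) ⊔ k ≤ (x : ℕ) <;> simp [hx] <;> ring
    · symm
      rw [Finset.sum_eq_single i]
      · by_cases hik : (i : ℕ) < k <;> simp [hik]
      · intro b _ hb
        simp [hb]
      · simp
  rw [hL.fderiv, LinearMap.coe_toContinuousLinearMap, LinearMap.det_toLin']
  rw [Matrix.det_of_upperTriangular (M := J)]
  · -- product of diagonal entries
    have hdiag : ∀ i : Fin n, J i i =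
        ∏ t : Fin n, (if (if (i : ℕ) < k then k ≤ (t : ℕ) else (i : ℕ) < (t : ℕ))
          then w t else 1) := by
      intro i
      by_cases hik : (i : ℕ) < k
      · have h1 : ¬ ((i : ℕ) ⊔ k ≤ (i : ℕ)) := by
          rw [sup_le_iff]; omega
        have hm : (i : ℕ) ⊔ k = k := sup_eq_right.2 hik.le
        simp only [hJ, if_pos hik, if_neg h1, mul_zero, zero_add,
          mul_one, hm]
        simp [hik, Nat.not_le.2 hik]
      · have hmax : (i : ℕ) ⊔ k = (i : ℕ) := sup_eq_left.2 (not_lt.mp hik)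
        have h1 : ∏ t ∈ Finset.univ.erase i, (if (i : ℕ) ≤ (t : ℕ) then w t else 1)
            = ∏ t : Fin n, (if (i : ℕ) < (t : ℕ) then w t else 1) := by
          rw [← Finset.prod_erase Finset.univ (a := i) (f := fun t : Fin n =>
            if (i : ℕ) < (t : ℕ) then w t else 1) (by simp)]
          apply Finset.prod_congr rfl
          intro t ht
          have hne : (t : ℕ) ≠ (i : ℕ) := fun h => (Finset.mem_erase.1 ht).1 (Fin.ext h)
          by_cases h2 : (i : ℕ) < (t : ℕ)
          · rw [if_pos h2, if_pos (le_of_lt h2)]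
          · rw [if_neg h2, if_neg (by omega)]
        simp only [hJ, hmax, if_neg hik, if_pos (le_refl (i : ℕ)), one_mul,
          mul_zero, add_zero, h1]
        simp [hik]
    rw [Finset.prod_congr rfl fun i _ => hdiag i, Finset.prod_comm]
    apply Finset.prod_congr rfl
    intro t _
    by_cases hkt : k ≤ (t : ℕ)
    · rw [if_pos hkt, ← Finset.prod_filter, Finset.prod_const]
      congr 1
      have e1 : (Finset.univ.filter
          (fun i : Fin n => if (i : ℕ) < k then k ≤ (t : ℕ) else (i : ℕ) < (t : ℕ)))
          = Finset.Iio t := by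
        ext i
        simp only [Finset.mem_filter, Finset.mem_univ, true_and, Finset.mem_Iio, Fin.lt_def]
        by_cases h : (i : ℕ) < k
        · rw [if_pos h]
          exact ⟨fun _ => lt_of_lt_of_le h hkt, fun _ => hkt⟩
        · rw [if_neg h]
      rw [e1, Fin.card_Iio]
    · rw [if_neg hkt, ← Finset.prod_filter]
      have e3 : (Finset.univ.filter
          (fun i : Fin n => if (i : ℕ) < k then k ≤ (t : ℕ) else (i : ℕ) < (t : ℕ)))
          = ∅ := by
        rw [Finset.filter_eq_empty_iff]
        intro i _
        by_cases h : (i : ℕ) < k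
        · rw [if_pos h]; exact hkt
        · rw [if_neg h]; omega
      rw [e3, Finset.prod_empty]
  · intro i j hij
    have hij' : (j : ℕ) < (i : ℕ) := hij
    have h1 : ¬ max (i : ℕ) k ≤ (j : ℕ) := by omega
    have h2 : j ≠ i := Fin.ne_of_lt hij
    simp only [hJ, if_neg h1,
      if_neg (show ¬ ((i : ℕ) < k ∧ j = i) from fun h => h2 h.2), mul_zero, add_zero]
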